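/- Theorem 2 (bias ordering of free energy estimators): under the factorized transition assumption, E_T[F_AIS(S_T)] ≥ E_τ[F_mAIS(S_τ)] ≥ F, where F_AIS(S_T) = -ln Z_0 - ln((1/N) Σ_μ W(X_μ)), F_mAIS(S_τ) = -ln Z_0 - ln((1/N) Σ_μ Λ(V_μ)), and F = -ln Z. -/

import Mathlib

-- === aux lemmas (already tested) ===
lemma jensen_log {ι : Type*} [Fintype ι] (w p : ι → ℝ)
    (hw : ∀ i, 0 ≤ w i) (hw1 : ∑ i, w i = 1) (hp : ∀ i, 0 < p i) :
    ∑ i, w i * Real.log (p i) ≤ Real.log (∑ i, w i * p i) := by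
  have := strictConcaveOn_log_Ioi.concaveOn.le_map_sum
    (t := Finset.univ) (w := w) (p := p)
    (fun i _ => hw i) hw1 (fun i _ => hp i)
  simpa [smul_eq_mul] using this

lemma sum_pi_prod {ι : Type*} [Fintype ι] [DecidableEq ι] {δ : ι → Type*}
    [∀ i, Fintype (δ i)] (f : ∀ i, δ i → ℝ) :
    ∑ g : ∀ i, δ i, ∏ i, f i (g i) = ∏ i, ∑ x, f i x := by
  rw [Finset.prod_univ_sum]; simp

lemma sum_pi_prod_single {ι : Type*} [Fintype ι] [DecidableEq ι] {δ : Type*}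
    [Fintype δ] (f : ι → δ → ℝ) (μ : ι) (e : δ → ℝ)
    (hone : ∀ ν, ∑ x, f ν x = 1) :
    ∑ g : ι → δ, (∏ ν, f ν (g ν)) * e (g μ) = ∑ x, f μ x * e x := by
  have key : ∀ g : ι → δ, (∏ ν, f ν (g ν)) * e (g μ)
      = ∏ ν, f ν (g ν) * (if ν = μ then e (g ν) else 1) := by
    intro g
    rw [Finset.prod_mul_distrib]
    congr 1
    rw [Finset.prod_eq_single μ]
    · simp
    · intro b _ hb; simp [hb]
    · simp
  rw [Finset.sum_congr rfl fun g _ => key g,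
    sum_pi_prod (fun ν x => f ν x * (if ν = μ then e x else 1)),
    Finset.prod_eq_single μ]
  · simp
  · intro b _ hb
    simp only [hb, if_false, mul_one]
    exact hone b
  · simp

section chain
variable {V : Type*} [Fintype V]

noncomputable def chainProp (F : ℕ → V → V → ℝ) (g : V → ℝ) : ℕ → V → ℝ
  | 0 => g
  | (k+1) => fun v' => ∑ v, F k v' v * chainProp F g k v

lemma chainProp_shift (F : ℕ → V → V → ℝ) (g : V → ℝ) (n : ℕ) :
    chainProp (fun k => F (k+1)) (fun v' => ∑ v, F 0 v' v * g v) n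
      = chainProp F g (n+1) := by
  induction n with
  | zero => rfl
  | succ n ih =>
      funext v'
      show (∑ v, F (n+1) v' v * chainProp (fun k => F (k+1)) _ n v) = _
      rw [ih]; rfl

lemma chainSum (n : ℕ) (F : ℕ → V → V → ℝ) (g : V → ℝ) :
    ∑ Vt : Fin (n+1) → V,
      (∏ i : Fin n, F i (Vt i.succ) (Vt i.castSucc)) * g (Vt 0)
      = ∑ v, chainProp F g n v := by
  induction n generalizing F g with
  | zero =>
      rw [← (Equiv.funUnique (Fin 1) V).symm.sum_comp]
      simp [chainProp]
  | succ n ih =>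
      rw [← (Fin.consEquiv (fun _ : Fin (n+2) => V)).sum_comp, Fintype.sum_prod_type]
      simp only [Fin.consEquiv_apply]
      have key : ∀ (v0 : V) (rest : Fin (n+1) → V),
          (∏ i : Fin (n+1), F i ((Fin.cons v0 rest : Fin (n+2) → V) i.succ)
              ((Fin.cons v0 rest : Fin (n+2) → V) i.castSucc)) * g v0
          = F 0 (rest 0) v0 * g v0 *
            ∏ i : Fin n, F (i+1) (rest i.succ) (rest i.castSucc) := by
        intro v0 rest
        rw [Fin.prod_univ_succ]
        have h1 : ∀ i : Fin n,
            F (i.succ : Fin (n+1)) ((Fin.cons v0 rest : Fin (n+2) → V) i.succ.succ)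
              ((Fin.cons v0 rest : Fin (n+2) → V) i.succ.castSucc)
            = F (i+1) (rest i.succ) (rest i.castSucc) := by
          intro i
          rw [← Fin.succ_castSucc, Fin.cons_succ, Fin.cons_succ]
          simp
        rw [Finset.prod_congr rfl (fun i _ => h1 i)]
        simp only [Fin.cons_succ, Fin.castSucc_zero, Fin.cons_zero, Fin.val_zero,
          Nat.cast_zero]
        ring
      rw [Finset.sum_comm]
      have step : ∀ rest : Fin (n+1) → V,
          (∑ v0, (∏ i : Fin (n+1), F i ((Fin.cons v0 rest : Fin (n+2) → V) i.succ)
              ((Fin.cons v0 rest : Fin (n+2) → V) i.castSucc)) *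
              g ((Fin.cons v0 rest : Fin (n+2) → V) 0))
          = (∏ i : Fin n, F (i+1) (rest i.succ) (rest i.castSucc)) *
              (∑ v0, F 0 (rest 0) v0 * g v0) := by
        intro rest
        rw [Finset.mul_sum]
        refine Finset.sum_congr rfl fun v0 _ => ?_
        rw [Fin.cons_zero, key v0 rest]; ring
      rw [Finset.sum_congr rfl (fun rest _ => step rest),
        ih (fun k => F (k+1)) (fun v' => ∑ v, F 0 v' v * g v), chainProp_shift]

lemma chainProp_mass (F : ℕ → V → V → ℝ) (g : V → ℝ)
    (hF : ∀ k v, ∑ v' : V, F k v' v = 1) (n : ℕ) :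
    ∑ v, chainProp F g n v = ∑ v, g v := by
  induction n with
  | zero => rfl
  | succ n ih =>
      show ∑ v', ∑ v, F n v' v * chainProp F g n v = _
      rw [Finset.sum_comm]
      simp_rw [← Finset.sum_mul, hF]
      simpa using ih

lemma chainProp_eq (F : ℕ → V → V → ℝ) (g : V → ℝ) (n : ℕ) (G : ℕ → V → ℝ)
    (hG0 : G 0 = g) (hGs : ∀ k, k < n → ∀ v', G (k+1) v' = ∑ v, F k v' v * G k v) :
    chainProp F g n = G n := by
  induction n with
  | zero => exact hG0.symm
  | succ n ih =>
      funext v'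
      show (∑ v, F n v' v * chainProp F g n v) = _
      rw [ih (fun k hk => hGs k (Nat.lt_succ_of_lt hk)),
        hGs n (Nat.lt_succ_self n) v']
end chain

open Fin.NatCast

def combVH {V H : Type*} {n : ℕ} (Vt : Fin n → V) (Ht : Fin n → H) : Fin n → V × H :=
  fun j => (Vt j, Ht j)

/-- Theorem 2, bias ordering of free energy estimators: under the
factorized transition assumption, `E_T[F_AIS(S_T)] ≥ E_τ[F_mAIS(S_τ)] ≥ F`, where
`F_AIS(S_T) = -ln Z_0 - ln((1/N) Σ_μ W(X_μ))`, `F_mAIS(S_τ) = -ln Z_0 - ln((1/N) Σ_μ Λ(V_μ))`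
and `F = -ln Z`. Trajectories are encoded over `Fin (K+1)` (paper's K is `K+1`). -/
theorem stmt14 {V H : Type*} [Fintype V] [Fintype H] (K N : ℕ) (hN : 0 < N)
    (E : Fin (K + 2) → V → H → ℝ)
    (Z : Fin (K + 2) → ℝ) (hZ : ∀ k, Z k = ∑ v : V, ∑ h : H, Real.exp (-(E k v h)))
    (P : Fin (K + 2) → V × H → ℝ)
    (hP : ∀ k x, P k x = Real.exp (-(E k x.1 x.2)) / Z k)
    (Pv : Fin (K + 2) → V → ℝ) (hPv : ∀ k v, Pv k v = ∑ h : H, P k (v, h))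
    (hPvpos : ∀ k v, 0 < Pv k v)
    (Phv : Fin (K + 2) → V → H → ℝ)
    (hPhv : ∀ k v h, Phv k v h = P k (v, h) / Pv k v)
    (τ : Fin (K + 2) → V → V → ℝ)
    (hτnn : ∀ k v v', 0 ≤ τ k v' v) (hτnorm : ∀ k v, (∑ v' : V, τ k v' v) = 1)
    (hτinv : ∀ k v', (∑ v : V, τ k v' v * Pv k v) = Pv k v')
    (T : Fin (K + 2) → V × H → V × H → ℝ)
    (hT : ∀ k (x' x : V × H), T k x' x = Phv k x'.1 x'.2 * τ k x'.1 x.1)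
    (EV : Fin (K + 2) → V → ℝ)
    (hEV : ∀ k v, EV k v = -Real.log (∑ h : H, Real.exp (-(E k v h))))
    (W : (Fin (K + 1) → V × H) → ℝ)
    (hW : ∀ X, W X = ∏ i : Fin (K + 1),
      Real.exp (-(E i.succ (X i).1 (X i).2) + E i.castSucc (X i).1 (X i).2))
    (Λ : (Fin (K + 1) → V) → ℝ)
    (hΛ : ∀ Vt, Λ Vt = ∏ i : Fin (K + 1),
      Real.exp (-(EV i.succ (Vt i)) + EV i.castSucc (Vt i)))
    (Tp : (Fin (K + 1) → V × H) → ℝ)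
    (hTp : ∀ X, Tp X =
      (∏ i : Fin K, T i.succ.castSucc (X i.succ) (X i.castSucc)) * P 0 (X 0))
    (τp : (Fin (K + 1) → V) → ℝ)
    (hτp : ∀ Vt, τp Vt =
      (∏ i : Fin K, τ i.succ.castSucc (Vt i.succ) (Vt i.castSucc)) * Pv 0 (Vt 0))
    (FA : (Fin N → Fin (K + 1) → V × H) → ℝ)
    (hFA : ∀ SS, FA SS =
      -Real.log (Z 0) - Real.log ((1 / N : ℝ) * ∑ μ : Fin N, W (SS μ)))
    (Fm : (Fin N → Fin (K + 1) → V) → ℝ)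
    (hFm : ∀ SV, Fm SV =
      -Real.log (Z 0) - Real.log ((1 / N : ℝ) * ∑ μ : Fin N, Λ (SV μ))) :
    (∑ SS : Fin N → Fin (K + 1) → V × H, (∏ μ : Fin N, Tp (SS μ)) * FA SS) ≥
        (∑ SV : Fin N → Fin (K + 1) → V, (∏ μ : Fin N, τp (SV μ)) * Fm SV) ∧
      (∑ SV : Fin N → Fin (K + 1) → V, (∏ μ : Fin N, τp (SV μ)) * Fm SV) ≥
        -Real.log (Z (Fin.last (K + 1))) := by
  classical
  by_cases hVne : Nonempty V
  case neg =>
    haveI : IsEmpty V := not_nonempty_iff.mp hVne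
    haveI h1 : IsEmpty (Fin N → Fin (K+1) → V) :=
      ⟨fun f => IsEmpty.false (f ⟨0, hN⟩ 0)⟩
    haveI h2 : IsEmpty (Fin N → Fin (K+1) → V × H) :=
      ⟨fun f => IsEmpty.false (f ⟨0, hN⟩ 0).1⟩
    have hZ0 : Z (Fin.last (K+1)) = 0 := by
      rw [hZ]; simp [Finset.univ_eq_empty]
    constructor <;> simp [Finset.univ_eq_empty, hZ0]
  case pos =>
  have hHne : Nonempty H := by
    by_contra h
    haveI : IsEmpty H := not_nonempty_iff.mp h
    obtain ⟨v⟩ := hVne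
    have h0 := hPvpos 0 v
    rw [hPv] at h0
    simp [Finset.univ_eq_empty] at h0
  haveI := hVne
  haveI := hHne
  -- basic positivity
  have hsum_pos : ∀ (k : Fin (K+2)) (v : V), 0 < ∑ h : H, Real.exp (-(E k v h)) :=
    fun k v => Finset.sum_pos (fun h _ => Real.exp_pos _) Finset.univ_nonempty
  have hZpos : ∀ k, 0 < Z k := by
    intro k; rw [hZ]
    exact Finset.sum_pos (fun v _ => hsum_pos k v) Finset.univ_nonempty
  have hexpEV : ∀ k v, Real.exp (-(EV k v)) = ∑ h : H, Real.exp (-(E k v h)) := by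
    intro k v; rw [hEV, neg_neg, Real.exp_log (hsum_pos k v)]
  have hZPv : ∀ k v, Z k * Pv k v = Real.exp (-(EV k v)) := by
    intro k v
    rw [hexpEV, hPv]
    have : ∀ h : H, P k (v, h) = Real.exp (-(E k v h)) / Z k := fun h => hP k (v, h)
    rw [Finset.sum_congr rfl fun h _ => this h, ← Finset.sum_div,
      mul_div_cancel₀ _ (hZpos k).ne']
  have hPhvE : ∀ k v h, Phv k v h = Real.exp (-(E k v h) + EV k v) := by
    intro k v h
    rw [show -(E k v h) + EV k v = -(E k v h) - (-(EV k v)) by ring, Real.exp_sub,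
      hPhv, hP, ← hZPv k v, div_div]
  have hPhvsum : ∀ k v, ∑ h : H, Phv k v h = 1 := by
    intro k v
    rw [Finset.sum_congr rfl fun h _ => hPhv k v h, ← Finset.sum_div, ← hPv,
      div_self (hPvpos k v).ne']
  have hPvsum : ∀ k, ∑ v : V, Pv k v = 1 := by
    intro k
    have hv : ∀ v, Pv k v = (∑ h : H, Real.exp (-(E k v h))) / Z k := by
      intro v
      rw [eq_div_iff (hZpos k).ne', mul_comm, hZPv, hexpEV]
    rw [Finset.sum_congr rfl fun v _ => hv v, ← Finset.sum_div, ← hZ,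
      div_self (hZpos k).ne']
  have hτpnn : ∀ Vt : Fin (K+1) → V, 0 ≤ τp Vt := by
    intro Vt
    rw [hτp]
    exact mul_nonneg (Finset.prod_nonneg fun i _ => hτnn _ _ _) (hPvpos _ _).le
  have hΛpos : ∀ Vt : Fin (K+1) → V, 0 < Λ Vt := by
    intro Vt; rw [hΛ]; exact Finset.prod_pos fun i _ => Real.exp_pos _
  have hWpos : ∀ X : Fin (K+1) → V × H, 0 < W X := by
    intro X; rw [hW]; exact Finset.prod_pos fun i _ => Real.exp_pos _
  -- cast bookkeeping
  have hfc : ∀ (a : Fin (K+2)) (n : ℕ), n < K + 2 → (a : ℕ) = n →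
      a = ((n : ℕ) : Fin (K+2)) := by
    intro a n h hv
    apply Fin.ext
    rw [Fin.val_cast_of_lt h, hv]
  -- lamxp
  set lam : ℕ → V → ℝ := fun k v =>
    Real.exp (-(EV ((k+1 : ℕ) : Fin (K+2)) v) + EV ((k : ℕ) : Fin (K+2)) v) with hlam
  have hlamratio : ∀ (k : ℕ) (v : V), lam k v =
      (Z ((k+1 : ℕ) : Fin (K+2)) * Pv ((k+1 : ℕ) : Fin (K+2)) v) /
        (Z ((k : ℕ) : Fin (K+2)) * Pv ((k : ℕ) : Fin (K+2)) v) := by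
    intro k v
    rw [hZPv, hZPv]
    simp only [hlam]
    rw [← Real.exp_sub]
    congr 1
    ring
  -- (i): sum of τp = 1
  have hτpsum : ∑ Vt : Fin (K+1) → V, τp Vt = 1 := by
    have hτp' : ∀ Vt : Fin (K+1) → V, τp Vt =
        (∏ i : Fin K, (fun (k : ℕ) (v' v : V) => τ ((k+1 : ℕ) : Fin (K+2)) v' v)
          (i : ℕ) (Vt i.succ) (Vt i.castSucc)) * Pv 0 (Vt 0) := by
      intro Vt
      rw [hτp]
      congr 1
      refine Finset.prod_congr rfl fun i _ => ?_
      have : i.succ.castSucc = (((i : ℕ)+1 : ℕ) : Fin (K+2)) :=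
        hfc _ _ (by omega) (by simp)
      rw [this]
    rw [Finset.sum_congr rfl fun Vt _ => hτp' Vt,
      chainSum K (fun k v' v => τ ((k+1 : ℕ) : Fin (K+2)) v' v) (Pv 0),
      chainProp_mass _ _ (fun k v => hτnorm _ v), hPvsum 0]
  -- (ii): sum of τp * Λ
  have hτpΛ : ∑ Vt : Fin (K+1) → V, τp Vt * Λ Vt = Z (Fin.last (K+1)) / Z 0 := by
    set F2 : ℕ → V → V → ℝ :=
      fun k v' v => τ ((k+1 : ℕ) : Fin (K+2)) v' v * lam (k+1) v' with hF2
    set g2 : V → ℝ := fun v => Pv 0 v * lam 0 v with hg2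
    have hrw : ∀ Vt : Fin (K+1) → V, τp Vt * Λ Vt =
        (∏ i : Fin K, F2 (i : ℕ) (Vt i.succ) (Vt i.castSucc)) * g2 (Vt 0) := by
      intro Vt
      rw [hτp, hΛ, Fin.prod_univ_succ
        (fun i : Fin (K+1) => Real.exp (-(EV i.succ (Vt i)) + EV i.castSucc (Vt i)))]
      have h0 : Real.exp (-(EV (0 : Fin (K+1)).succ (Vt 0))
          + EV (0 : Fin (K+1)).castSucc (Vt 0)) = lam 0 (Vt 0) := by
        have e1 : (0 : Fin (K+1)).succ = ((0+1 : ℕ) : Fin (K+2)) :=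
          hfc _ _ (by omega) (by simp)
        have e2 : (0 : Fin (K+1)).castSucc = ((0 : ℕ) : Fin (K+2)) :=
          hfc _ _ (by omega) (by simp)
        rw [e1, e2]
      have htail : ∀ i : Fin K,
          Real.exp (-(EV i.succ.succ (Vt i.succ)) + EV i.succ.castSucc (Vt i.succ))
          = lam ((i : ℕ)+1) (Vt i.succ) := by
        intro i
        have e1 : i.succ.succ = (((i : ℕ)+1+1 : ℕ) : Fin (K+2)) :=
          hfc _ _ (by omega) (by simp)
        have e2 : i.succ.castSucc = (((i : ℕ)+1 : ℕ) : Fin (K+2)) :=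
          hfc _ _ (by omega) (by simp)
        rw [e1, e2]
      rw [h0, Finset.prod_congr rfl fun i _ => htail i]
      have hτe : ∀ i : Fin K, τ i.succ.castSucc (Vt i.succ) (Vt i.castSucc)
          = τ (((i : ℕ)+1 : ℕ) : Fin (K+2)) (Vt i.succ) (Vt i.castSucc) := by
        intro i
        have e1 : i.succ.castSucc = (((i : ℕ)+1 : ℕ) : Fin (K+2)) :=
          hfc _ _ (by omega) (by simp)
        rw [e1]
      rw [Finset.prod_congr rfl fun i _ => hτe i]
      simp only [hF2, hg2, Finset.prod_mul_distrib]
      ring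
    have hG0 : (fun (k : ℕ) (v : V) =>
        Z ((k+1 : ℕ) : Fin (K+2)) * Pv ((k+1 : ℕ) : Fin (K+2)) v / Z 0) 0 = g2 := by
      funext v
      simp only [hg2]
      rw [hlamratio 0 v]
      have e2 : ((0 : ℕ) : Fin (K+2)) = 0 := by simp
      rw [e2]
      field_simp [(hPvpos 0 v).ne', (hZpos 0).ne']
    have hGs : ∀ k, k < K → ∀ v',
        (fun (k : ℕ) (v : V) =>
          Z ((k+1 : ℕ) : Fin (K+2)) * Pv ((k+1 : ℕ) : Fin (K+2)) v / Z 0) (k+1) v'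
        = ∑ v, F2 k v' v * (fun (k : ℕ) (v : V) =>
          Z ((k+1 : ℕ) : Fin (K+2)) * Pv ((k+1 : ℕ) : Fin (K+2)) v / Z 0) k v := by
      intro k hk v'
      have hstep : ∀ v, F2 k v' v *
          (Z ((k+1 : ℕ) : Fin (K+2)) * Pv ((k+1 : ℕ) : Fin (K+2)) v / Z 0)
          = (lam (k+1) v' * Z ((k+1 : ℕ) : Fin (K+2)) / Z 0) *
            (τ ((k+1 : ℕ) : Fin (K+2)) v' v * Pv ((k+1 : ℕ) : Fin (K+2)) v) := by
        intro v; simp only [hF2]; ring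
      rw [Finset.sum_congr rfl fun v _ => hstep v, ← Finset.mul_sum, hτinv]
      simp only
      rw [hlamratio (k+1) v']
      have h2 := (hZpos (((k+1 : ℕ)) : Fin (K+2))).ne'
      have h3 := (hPvpos (((k+1 : ℕ)) : Fin (K+2)) v').ne'
      have h4 := (hZpos 0).ne'
      have habc : ∀ (a z p d : ℝ), z ≠ 0 → p ≠ 0 → d ≠ 0 →
          a / (z * p) * z / d * p = a / d := by
        intro a z p d hz hp hd
        field_simp
      exact (habc _ _ _ _ h2 h3 h4).symm
    rw [Finset.sum_congr rfl fun Vt _ => hrw Vt, chainSum K F2 g2,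
      chainProp_eq F2 g2 K (fun (k : ℕ) (v : V) =>
        Z ((k+1 : ℕ) : Fin (K+2)) * Pv ((k+1 : ℕ) : Fin (K+2)) v / Z 0) hG0 hGs]
    have hlast : ((K+1 : ℕ) : Fin (K+2)) = Fin.last (K+1) := by
      apply Fin.ext
      rw [Fin.val_cast_of_lt (by omega)]
      simp
    simp only
    rw [hlast, ← Finset.sum_div, ← Finset.mul_sum, hPvsum, mul_one]
  haveI hNFin : Nonempty (Fin N) := ⟨⟨0, hN⟩⟩
  -- H-side facts
  have hΦsum : ∀ Vt : Fin (K+1) → V,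
      ∑ Ht : Fin (K+1) → H, ∏ j : Fin (K+1), Phv j.castSucc (Vt j) (Ht j) = 1 := by
    intro Vt
    rw [sum_pi_prod (fun (j : Fin (K+1)) (h : H) => Phv j.castSucc (Vt j) h)]
    exact Finset.prod_eq_one fun j _ => hPhvsum _ _
  have hΦnn : ∀ (Vt : Fin (K+1) → V) (Ht : Fin (K+1) → H),
      0 ≤ ∏ j : Fin (K+1), Phv j.castSucc (Vt j) (Ht j) :=
    fun Vt Ht => Finset.prod_nonneg fun j _ => by
      rw [hPhvE]; exact (Real.exp_pos _).le
  have hTfac : ∀ (Vt : Fin (K+1) → V) (Ht : Fin (K+1) → H),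
      Tp (combVH Vt Ht) = τp Vt * ∏ j : Fin (K+1), Phv j.castSucc (Vt j) (Ht j) := by
    intro Vt Ht
    rw [hTp, hτp]
    have hT' : ∀ i : Fin K,
        T i.succ.castSucc (combVH Vt Ht i.succ) (combVH Vt Ht i.castSucc)
        = Phv i.succ.castSucc (Vt i.succ) (Ht i.succ) *
            τ i.succ.castSucc (Vt i.succ) (Vt i.castSucc) := by
      intro i; rw [hT]; rfl
    rw [Finset.prod_congr rfl fun i _ => hT' i, Finset.prod_mul_distrib]
    have hP0 : P 0 (combVH Vt Ht 0) = Phv 0 (Vt 0) (Ht 0) * Pv 0 (Vt 0) := by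
      rw [show combVH Vt Ht 0 = (Vt 0, Ht 0) from rfl, hPhv,
        div_mul_cancel₀ _ (hPvpos 0 (Vt 0)).ne']
    rw [hP0, Fin.prod_univ_succ (fun j : Fin (K+1) => Phv j.castSucc (Vt j) (Ht j))]
    rw [Fin.castSucc_zero]
    ring
  have hΦW : ∀ Vt : Fin (K+1) → V,
      ∑ Ht : Fin (K+1) → H,
        (∏ j : Fin (K+1), Phv j.castSucc (Vt j) (Ht j)) * W (combVH Vt Ht)
        = Λ Vt := by
    intro Vt
    have hcomb1 : ∀ Ht : Fin (K+1) → H,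
        (∏ j : Fin (K+1), Phv j.castSucc (Vt j) (Ht j)) * W (combVH Vt Ht)
        = ∏ j : Fin (K+1), (Phv j.castSucc (Vt j) (Ht j) *
            Real.exp (-(E j.succ (Vt j) (Ht j)) + E j.castSucc (Vt j) (Ht j))) := by
      intro Ht
      rw [hW, ← Finset.prod_mul_distrib]
      rfl
    rw [Finset.sum_congr rfl fun Ht _ => hcomb1 Ht,
      sum_pi_prod (fun (j : Fin (K+1)) (h : H) => Phv j.castSucc (Vt j) h *
        Real.exp (-(E j.succ (Vt j) h) + E j.castSucc (Vt j) h)), hΛ]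
    refine Finset.prod_congr rfl fun j _ => ?_
    have hsite : ∀ h : H, Phv j.castSucc (Vt j) h *
        Real.exp (-(E j.succ (Vt j) h) + E j.castSucc (Vt j) h)
        = Real.exp (-(E j.succ (Vt j) h)) * Real.exp (EV j.castSucc (Vt j)) := by
      intro h
      rw [hPhvE, ← Real.exp_add, ← Real.exp_add]
      congr 1
      ring
    rw [Finset.sum_congr rfl fun h _ => hsite h, ← Finset.sum_mul, ← hexpEV,
      ← Real.exp_add]
  -- equivalence decomposing full samples
  let e1 : (Fin (K+1) → V × H) ≃ ((Fin (K+1) → V) × (Fin (K+1) → H)) :=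
    Equiv.arrowProdEquivProdArrow (Fin (K+1)) (fun _ => V) (fun _ => H)
  let e2 : (Fin N → Fin (K+1) → V × H) ≃
      ((Fin N → Fin (K+1) → V) × (Fin N → Fin (K+1) → H)) :=
    (Equiv.arrowCongr (Equiv.refl (Fin N)) e1).trans
      (Equiv.arrowProdEquivProdArrow _ _ _)
  have he2 : ∀ (SV : Fin N → Fin (K+1) → V) (SH : Fin N → Fin (K+1) → H),
      e2.symm (SV, SH) = fun μ => combVH (SV μ) (SH μ) := fun _ _ => rfl
  -- first inequality, fixed SV
  have ineq1 : ∀ SV : Fin N → Fin (K+1) → V,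
      (∏ μ, τp (SV μ)) * Fm SV ≤
      ∑ SH : Fin N → Fin (K+1) → H,
        (∏ μ, Tp (combVH (SV μ) (SH μ))) * FA (fun μ => combVH (SV μ) (SH μ)) := by
    intro SV
    set w : (Fin N → Fin (K+1) → H) → ℝ :=
      fun SH => ∏ μ, ∏ j : Fin (K+1), Phv j.castSucc (SV μ j) (SH μ j) with hwdef
    set pf : (Fin N → Fin (K+1) → H) → ℝ :=
      fun SH => (1 / N : ℝ) * ∑ μ, W (combVH (SV μ) (SH μ)) with hpdef
    have hwnn : ∀ SH, 0 ≤ w SH := fun SH => Finset.prod_nonneg fun μ _ => hΦnn _ _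
    have hwsum : ∑ SH, w SH = 1 := by
      have hs : (∑ SH : Fin N → Fin (K+1) → H,
            ∏ μ, ∏ j : Fin (K+1), Phv j.castSucc (SV μ j) (SH μ j))
          = ∏ μ : Fin N, ∑ Ht : Fin (K+1) → H,
              ∏ j : Fin (K+1), Phv j.castSucc (SV μ j) (Ht j) :=
        sum_pi_prod (fun (μ : Fin N) (Ht : Fin (K+1) → H) =>
          ∏ j : Fin (K+1), Phv j.castSucc (SV μ j) (Ht j))
      simp only [hwdef]
      rw [hs]
      exact Finset.prod_eq_one fun μ _ => hΦsum (SV μ)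
    have hppos : ∀ SH, 0 < pf SH := by
      intro SH
      have hN' : (0:ℝ) < N := by exact_mod_cast hN
      have hs := Finset.sum_pos
        (fun μ (_ : μ ∈ (Finset.univ : Finset (Fin N))) => hWpos (combVH (SV μ) (SH μ)))
        Finset.univ_nonempty
      rw [hpdef]
      positivity
    have hmean : ∑ SH, w SH * pf SH = (1 / N : ℝ) * ∑ μ, Λ (SV μ) := by
      have h1 : ∀ SH, w SH * pf SH
          = ∑ μ, (1/N : ℝ) * (w SH * W (combVH (SV μ) (SH μ))) := by
        intro SH
        rw [hpdef]
        simp only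
        rw [Finset.mul_sum, Finset.mul_sum]
        exact Finset.sum_congr rfl fun μ _ => by ring
      rw [Finset.sum_congr rfl fun SH _ => h1 SH, Finset.sum_comm]
      have h2 : ∀ μ : Fin N, ∑ SH : Fin N → Fin (K+1) → H,
          w SH * W (combVH (SV μ) (SH μ)) = Λ (SV μ) := by
        intro μ
        have hs2 : (∑ SH : Fin N → Fin (K+1) → H,
              (∏ ν, ∏ j : Fin (K+1), Phv j.castSucc (SV ν j) (SH ν j)) *
                W (combVH (SV μ) (SH μ)))
            = ∑ Ht : Fin (K+1) → H,
                (∏ j : Fin (K+1), Phv j.castSucc (SV μ j) (Ht j)) *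
                  W (combVH (SV μ) Ht) :=
          sum_pi_prod_single (fun (ν : Fin N) (Ht : Fin (K+1) → H) =>
            ∏ j : Fin (K+1), Phv j.castSucc (SV ν j) (Ht j)) μ
            (fun Ht => W (combVH (SV μ) Ht)) (fun ν => hΦsum (SV ν))
        simp only [hwdef]
        rw [hs2]
        exact hΦW (SV μ)
      have h3 : ∀ μ : Fin N, ∑ SH : Fin N → Fin (K+1) → H,
          (1/N : ℝ) * (w SH * W (combVH (SV μ) (SH μ)))
          = (1/N : ℝ) * Λ (SV μ) := by
        intro μ
        rw [← Finset.mul_sum, h2 μ]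
      rw [Finset.sum_congr rfl fun μ _ => h3 μ, ← Finset.mul_sum]
    have hjen : ∑ SH, w SH * Real.log (pf SH)
        ≤ Real.log ((1/N : ℝ) * ∑ μ, Λ (SV μ)) := by
      rw [← hmean]
      exact jensen_log w pf hwnn hwsum hppos
    have hexp : ∑ SH : Fin N → Fin (K+1) → H,
        (∏ μ, Tp (combVH (SV μ) (SH μ))) * FA (fun μ => combVH (SV μ) (SH μ))
        = (∏ μ, τp (SV μ)) *
            ((-Real.log (Z 0)) - ∑ SH, w SH * Real.log (pf SH)) := by
      have hterm : ∀ SH : Fin N → Fin (K+1) → H,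
          (∏ μ, Tp (combVH (SV μ) (SH μ))) * FA (fun μ => combVH (SV μ) (SH μ))
          = (∏ μ, τp (SV μ)) *
              (w SH * (-Real.log (Z 0)) - w SH * Real.log (pf SH)) := by
        intro SH
        rw [hFA]
        have hprod : (∏ μ, Tp (combVH (SV μ) (SH μ))) = (∏ μ, τp (SV μ)) * w SH := by
          rw [Finset.prod_congr rfl fun μ _ => hTfac (SV μ) (SH μ),
            Finset.prod_mul_distrib]
        rw [hprod,
          show ((1 / N : ℝ) * ∑ μ, W ((fun μ => combVH (SV μ) (SH μ)) μ)) = pf SH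
            from rfl]
        ring
      rw [Finset.sum_congr rfl fun SH _ => hterm SH, ← Finset.mul_sum]
      congr 1
      rw [Finset.sum_sub_distrib, ← Finset.sum_mul, hwsum]
      ring
    rw [hexp, hFm]
    have hnn : (0:ℝ) ≤ ∏ μ, τp (SV μ) := Finset.prod_nonneg fun μ _ => hτpnn (SV μ)
    apply mul_le_mul_of_nonneg_left _ hnn
    linarith [hjen]
  have main1 : (∑ SS : Fin N → Fin (K+1) → V × H, (∏ μ, Tp (SS μ)) * FA SS)
      ≥ ∑ SV : Fin N → Fin (K+1) → V, (∏ μ, τp (SV μ)) * Fm SV := by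
    rw [ge_iff_le,
      ← Equiv.sum_comp e2.symm (fun SS => (∏ μ, Tp (SS μ)) * FA SS),
      Fintype.sum_prod_type]
    refine Finset.sum_le_sum fun SV _ => ?_
    exact ineq1 SV
  have main2 : (∑ SV : Fin N → Fin (K+1) → V, (∏ μ, τp (SV μ)) * Fm SV)
      ≥ -Real.log (Z (Fin.last (K+1))) := by
    set w' : (Fin N → Fin (K+1) → V) → ℝ := fun SV => ∏ μ, τp (SV μ) with hw'
    have hw'nn : ∀ SV, 0 ≤ w' SV := fun SV => Finset.prod_nonneg fun μ _ => hτpnn _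
    have hw'sum : ∑ SV, w' SV = 1 := by
      have hs : (∑ SV : Fin N → Fin (K+1) → V, ∏ μ, τp (SV μ))
          = ∏ μ : Fin N, ∑ Vt : Fin (K+1) → V, τp Vt :=
        sum_pi_prod (fun (μ : Fin N) (Vt : Fin (K+1) → V) => τp Vt)
      simp only [hw']
      rw [hs, Finset.prod_congr rfl fun μ _ => hτpsum]
      simp
    have hp'pos : ∀ SV : Fin N → Fin (K+1) → V,
        0 < (1/N : ℝ) * ∑ μ, Λ (SV μ) := by
      intro SV
      have hN' : (0:ℝ) < N := by exact_mod_cast hN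
      have hs := Finset.sum_pos
        (fun μ (_ : μ ∈ (Finset.univ : Finset (Fin N))) => hΛpos (SV μ))
        Finset.univ_nonempty
      positivity
    have hmean2 : ∑ SV : Fin N → Fin (K+1) → V,
        w' SV * ((1/N : ℝ) * ∑ μ, Λ (SV μ)) = Z (Fin.last (K+1)) / Z 0 := by
      have h1 : ∀ SV : Fin N → Fin (K+1) → V,
          w' SV * ((1/N : ℝ) * ∑ μ, Λ (SV μ))
          = ∑ μ, (1/N : ℝ) * (w' SV * Λ (SV μ)) := by
        intro SV
        rw [Finset.mul_sum, Finset.mul_sum]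
        exact Finset.sum_congr rfl fun μ _ => by ring
      rw [Finset.sum_congr rfl fun SV _ => h1 SV, Finset.sum_comm]
      have h2 : ∀ μ : Fin N, ∑ SV : Fin N → Fin (K+1) → V, w' SV * Λ (SV μ)
          = Z (Fin.last (K+1)) / Z 0 := by
        intro μ
        have hs2 : (∑ SV : Fin N → Fin (K+1) → V, (∏ ν, τp (SV ν)) * Λ (SV μ))
            = ∑ Vt : Fin (K+1) → V, τp Vt * Λ Vt :=
          sum_pi_prod_single (fun (ν : Fin N) (Vt : Fin (K+1) → V) => τp Vt) μ
            Λ (fun ν => hτpsum)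
        simp only [hw']
        rw [hs2]
        exact hτpΛ
      have h3 : ∀ μ : Fin N, ∑ SV : Fin N → Fin (K+1) → V,
          (1/N : ℝ) * (w' SV * Λ (SV μ))
          = (1/N : ℝ) * (Z (Fin.last (K+1)) / Z 0) := by
        intro μ
        rw [← Finset.mul_sum, h2 μ]
      rw [Finset.sum_congr rfl fun μ _ => h3 μ, Finset.sum_const,
        Finset.card_univ, Fintype.card_fin, nsmul_eq_mul]
      have hN' : (N:ℝ) ≠ 0 := by
        have : (0:ℝ) < N := by exact_mod_cast hN
        exact this.ne'
      field_simp
    have hjen2 : ∑ SV, w' SV * Real.log ((1/N:ℝ) * ∑ μ, Λ (SV μ))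
        ≤ Real.log (Z (Fin.last (K+1)) / Z 0) := by
      rw [← hmean2]
      exact jensen_log w' _ hw'nn hw'sum hp'pos
    have hFmexp : ∑ SV, w' SV * Fm SV
        = -Real.log (Z 0)
          - ∑ SV, w' SV * Real.log ((1/N:ℝ) * ∑ μ, Λ (SV μ)) := by
      have h4 : ∀ SV : Fin N → Fin (K+1) → V, w' SV * Fm SV
          = w' SV * (-Real.log (Z 0))
            - w' SV * Real.log ((1/N:ℝ) * ∑ μ, Λ (SV μ)) := by
        intro SV
        rw [hFm]
        ring
      rw [Finset.sum_congr rfl fun SV _ => h4 SV, Finset.sum_sub_distrib,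
        ← Finset.sum_mul, hw'sum]
      ring
    rw [ge_iff_le,
      show (∑ SV : Fin N → Fin (K+1) → V, (∏ μ, τp (SV μ)) * Fm SV)
        = ∑ SV, w' SV * Fm SV from rfl,
      hFmexp]
    have hlogdiv : Real.log (Z (Fin.last (K+1)) / Z 0)
        = Real.log (Z (Fin.last (K+1))) - Real.log (Z 0) :=
      Real.log_div (hZpos _).ne' (hZpos _).ne'
    linarith [hjen2]
  exact ⟨main1, main2⟩
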